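/- Let n ≥ 5 and J ⊆ {3,...,n} with |J| = m. Every J-circuit that is undominated with respect to (J, ∅) assigns to the variables (x_j)_{j∈J} exactly the values {v_1,...,v_m}; equivalently, the undominated J-circuits are precisely the assignments of v_1,...,v_m in some order to the x_j, j ∈ J. -/

import Mathlib

/-- The partial assignment `f` on `J` creates no cycle. -/
def NoCycleOn {n : ℕ} (f : Fin n → Fin n) (J : Finset (Fin n)) : Prop :=
  ¬ ∃ j ∈ J, ∃ k, 0 < k ∧ (∀ t < k, f^[t] j ∈ J) ∧ f^[k] j = j

/-- A `J`-circuit: an injective, cycle-free partial assignment on `J`. -/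
def IsJCircuit {n : ℕ} (J : Finset (Fin n)) (f : Fin n → Fin n) : Prop :=
  Set.InjOn f J ∧ NoCycleOn f J

/-- `g` dominates `f` with respect to the partition `(J₊, J₋)`. -/
def Dominates {n : ℕ} (v : Fin n → ℝ) (Jp Jm : Finset (Fin n)) (g f : Fin n → Fin n) : Prop :=
  (∃ j ∈ Jp ∪ Jm, g j ≠ f j) ∧ (∀ j ∈ Jp, v (g j) ≤ v (f j)) ∧ (∀ j ∈ Jm, v (f j) ≤ v (g j))

/-- A strictly monotone map `Fin m → ℕ` satisfies `i ≤ F i`. -/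
lemma fin_le_apply {m : ℕ} {F : Fin m → ℕ} (hF : StrictMono F) : ∀ i : Fin m, (i : ℕ) ≤ F i := by
  have key : ∀ k, ∀ i : Fin m, (i : ℕ) = k → k ≤ F i := by
    intro k
    induction k with
    | zero => intro i _; exact Nat.zero_le _
    | succ k ih =>
      intro i hi
      have hk : k < m := by omega
      have h1 : F ⟨k, hk⟩ < F i := hF (by simp [Fin.lt_def, hi])
      have h2 := ih ⟨k, hk⟩ rfl
      omega
  exact fun i => key _ i rfl

/-- If a map sends `J` outside of `J`, it creates no cycle on `J`. -/
lemma noCycle_of_out {n : ℕ} {g : Fin n → Fin n} {J : Finset (Fin n)}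
    (h : ∀ j ∈ J, g j ∉ J) : NoCycleOn g J := by
  rintro ⟨j, hj, k, hk, ht, hfix⟩
  have h1 : g^[1] j ∈ J := by
    rcases eq_or_lt_of_le (show 1 ≤ k from hk) with h' | h'
    · rw [← h'] at hfix; rw [hfix]; exact hj
    · exact ht 1 h'
  simp only [Function.iterate_one] at h1
  exact h j hj h1

/-- The sum of a finset of naturals is at least the sum of `0, …, card - 1`. -/
lemma sum_range_card_le (S : Finset ℕ) : ∑ i ∈ Finset.range S.card, i ≤ ∑ x ∈ S, x := by
  classical
  set e := S.orderIsoOfFin rfl with he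
  have hmono : StrictMono (fun i : Fin S.card => ((e i : ℕ))) := by
    intro a b hab
    exact_mod_cast e.strictMono hab
  have h1 : ∀ i : Fin S.card, (i : ℕ) ≤ (e i : ℕ) := fin_le_apply hmono
  calc ∑ i ∈ Finset.range S.card, i = ∑ i : Fin S.card, (i : ℕ) :=
        (Fin.sum_univ_eq_sum_range id _).symm
    _ ≤ ∑ i : Fin S.card, ((e i : ℕ)) := Finset.sum_le_sum fun i _ => h1 i
    _ = ∑ x : S, (x : ℕ) := Equiv.sum_comp e.toEquiv _
    _ = ∑ x ∈ S, x := by rw [Finset.univ_eq_attach]; exact Finset.sum_attach S (fun x => x)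

theorem stmt_8 (n : ℕ) (hn : 5 ≤ n) (v : Fin n → ℝ) (hv : StrictMono v)
    (J : Finset (Fin n)) (m : ℕ) (hcard : J.card = m)
    (hJ3 : ∀ j ∈ J, 2 ≤ (j : ℕ)) (hJm : ∀ j ∈ J, m ≤ (j : ℕ))
    (f : Fin n → Fin n) :
    (IsJCircuit J f ∧
      ¬ ∃ g : Fin n → Fin n, IsJCircuit J g ∧ Dominates v J ∅ g f) ↔
    (Set.InjOn f J ∧ ∀ j ∈ J, (f j : ℕ) < m) := by
  classical
  have hmn : m ≤ n := by
    rw [← hcard]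
    simpa using Finset.card_le_univ J
  constructor
  · rintro ⟨⟨hinj, hnc⟩, hund⟩
    refine ⟨hinj, ?_⟩
    by_contra hbad
    push_neg at hbad
    obtain ⟨j₀, hj₀, hj₀m⟩ := hbad
    set S := J.image f with hS
    have hScard : S.card = m := by
      rw [hS, Finset.card_image_of_injOn hinj, hcard]
    set e := S.orderIsoOfFin hScard with he
    have hmono : StrictMono (fun i : Fin m => ((e i : Fin n) : ℕ)) := by
      intro a b hab
      exact_mod_cast e.strictMono hab
    set g : Fin n → Fin n := fun j => if h : j ∈ J then
        ⟨(e.symm ⟨f j, Finset.mem_image_of_mem f h⟩ : Fin m),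
          lt_of_lt_of_le (Fin.is_lt _) hmn⟩
      else f j with hg
    have hgval : ∀ j (h : j ∈ J),
        (g j : ℕ) = (e.symm ⟨f j, Finset.mem_image_of_mem f h⟩ : Fin m) := by
      intro j h; simp [hg, h]
    have hglt : ∀ j ∈ J, (g j : ℕ) < m := by
      intro j hj; rw [hgval j hj]; exact Fin.is_lt _
    have hgle : ∀ j ∈ J, (g j : ℕ) ≤ (f j : ℕ) := by
      intro j hj
      have h1 := fin_le_apply hmono (e.symm ⟨f j, Finset.mem_image_of_mem f hj⟩)
      rw [OrderIso.apply_symm_apply] at h1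
      rw [hgval j hj]
      exact h1
    have hginj : Set.InjOn g J := by
      intro a ha b hb hab
      have h1 : (g a : ℕ) = (g b : ℕ) := by rw [hab]
      rw [hgval a ha, hgval b hb] at h1
      have h2 : e.symm ⟨f a, Finset.mem_image_of_mem f ha⟩
          = e.symm ⟨f b, Finset.mem_image_of_mem f hb⟩ := Fin.ext h1
      have h3 := congrArg (fun x => (e x : Fin n)) h2
      simp only [OrderIso.apply_symm_apply] at h3
      exact hinj ha hb h3
    apply hund
    refine ⟨g, ⟨hginj, noCycle_of_out ?_⟩, ⟨j₀, by simpa using hj₀, ?_⟩, ?_, by simp⟩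
    · intro j hj hmem
      have := hJm _ hmem
      have := hglt j hj
      omega
    · intro hcon
      have := hglt j₀ hj₀
      rw [hcon] at this
      omega
    · intro j hj
      exact hv.monotone (by exact_mod_cast hgle j hj)
  · rintro ⟨hinj, hlt⟩
    have hfnotJ : ∀ j ∈ J, f j ∉ J := by
      intro j hj hmem
      have := hJm (f j) hmem
      have := hlt j hj
      omega
    refine ⟨⟨hinj, noCycle_of_out hfnotJ⟩, ?_⟩
    rintro ⟨g, ⟨hginj, hgnc⟩, ⟨j₀, hj₀, hne⟩, hdom, -⟩
    rw [Finset.union_empty] at hj₀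
    have hgle : ∀ j ∈ J, (g j : ℕ) ≤ (f j : ℕ) := by
      intro j hj
      exact_mod_cast hv.le_iff_le.mp (hdom j hj)
    have hglt₀ : (g j₀ : ℕ) < (f j₀ : ℕ) :=
      lt_of_le_of_ne (hgle j₀ hj₀) (fun h => hne (Fin.ext h))
    have hsumlt : ∑ j ∈ J, (g j : ℕ) < ∑ j ∈ J, (f j : ℕ) :=
      Finset.sum_lt_sum (fun j hj => hgle j hj) ⟨j₀, hj₀, hglt₀⟩
    -- ∑ f = 0 + 1 + ⋯ + (m-1)
    set T := (J.image f).image Fin.val with hT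
    have hTcard : T.card = m := by
      rw [hT, Finset.card_image_of_injective _ Fin.val_injective,
        Finset.card_image_of_injOn hinj, hcard]
    have hTsub : T ⊆ Finset.range m := by
      intro x hx
      rw [hT, Finset.image_image] at hx
      obtain ⟨j, hj, rfl⟩ := Finset.mem_image.mp hx
      exact Finset.mem_range.mpr (hlt j hj)
    have hTeq : T = Finset.range m :=
      Finset.eq_of_subset_of_card_le hTsub (by simp [hTcard])
    have hfsum : ∑ j ∈ J, (f j : ℕ) = ∑ i ∈ Finset.range m, i := by
      rw [← hTeq, hT, Finset.sum_image (fun a _ b _ h => Fin.val_injective h),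
        Finset.sum_image (fun a ha b hb h => hinj ha hb h)]
    -- ∑ g ≥ 0 + 1 + ⋯ + (m-1)
    set Tg := (J.image g).image Fin.val with hTg
    have hTgcard : Tg.card = m := by
      rw [hTg, Finset.card_image_of_injective _ Fin.val_injective,
        Finset.card_image_of_injOn hginj, hcard]
    have hgsum : ∑ j ∈ J, (g j : ℕ) = ∑ x ∈ Tg, x := by
      rw [hTg, Finset.sum_image (fun a _ b _ h => Fin.val_injective h),
        Finset.sum_image (fun a ha b hb h => hginj ha hb h)]
    have hge := sum_range_card_le Tg
    rw [hTgcard] at hge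
    omega
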